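/- Suppose the angle of flight φ, viewed as a function of the flight path angle γ, is differentiable at γ₀ with derivative φ' and satisfies the implicit relation μ(1 − cos(φ γ))/(r₀ v₀²) + cos(φ γ + γ) cos γ = (r₀/r_p) cos²γ for all γ in a neighborhood of γ₀. If D₁ := μ sin(φ γ₀)/(r₀ v₀²) − (1/2)(sin(2γ₀ + φ γ₀) + sin(φ γ₀)) is nonzero, then φ' = (sin(2γ₀ + φ γ₀) − (r₀/r_p) sin(2γ₀)) / D₁. -/

import Mathlib

/-- Sensitivity of the angle of flight to the flight path angle (Eq. (36)). -/
theorem flight_angle_gamma_sensitivity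
    (μ r₀ r_p : ℝ) (hμ : 0 < μ) (hr₀ : 0 < r₀) (hrp : 0 < r_p)
    (v₀ : ℝ) (hv₀ : 0 < v₀) (γ₀ : ℝ)
    (φ : ℝ → ℝ) (φ' : ℝ) (hφ : HasDerivAt φ φ' γ₀)
    (himp : ∀ᶠ γ in nhds γ₀,
      μ * (1 - Real.cos (φ γ)) / (r₀ * v₀ ^ 2) + Real.cos (φ γ + γ) * Real.cos γ
        = (r₀ / r_p) * Real.cos γ ^ 2)
    (hD₁ : μ * Real.sin (φ γ₀) / (r₀ * v₀ ^ 2)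
        - (1 / 2) * (Real.sin (2 * γ₀ + φ γ₀) + Real.sin (φ γ₀)) ≠ 0) :
    φ' = (Real.sin (2 * γ₀ + φ γ₀) - (r₀ / r_p) * Real.sin (2 * γ₀))
        / (μ * Real.sin (φ γ₀) / (r₀ * v₀ ^ 2)
            - (1 / 2) * (Real.sin (2 * γ₀ + φ γ₀) + Real.sin (φ γ₀))) := by
  have hφγ : HasDerivAt (fun γ => φ γ + γ) (φ' + 1) γ₀ := hφ.add (hasDerivAt_id γ₀)
  have h1 : HasDerivAt (fun γ => μ * (1 - Real.cos (φ γ)) / (r₀ * v₀ ^ 2))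
      (μ * (0 - -Real.sin (φ γ₀) * φ') / (r₀ * v₀ ^ 2)) γ₀ :=
    (((hasDerivAt_const γ₀ (1:ℝ)).sub hφ.cos).const_mul μ).div_const _
  have h2 : HasDerivAt (fun γ => Real.cos (φ γ + γ) * Real.cos γ)
      ((-Real.sin (φ γ₀ + γ₀) * (φ' + 1)) * Real.cos γ₀
        + Real.cos (φ γ₀ + γ₀) * (-Real.sin γ₀)) γ₀ :=
    hφγ.cos.mul (Real.hasDerivAt_cos γ₀)
  have hA := h1.add h2
  have hB : HasDerivAt (fun γ => (r₀ / r_p) * Real.cos γ ^ 2)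
      ((r₀ / r_p) * ((2 : ℕ) * Real.cos γ₀ ^ 1 * -Real.sin γ₀)) γ₀ :=
    ((Real.hasDerivAt_cos γ₀).pow 2).const_mul _
  have hB' := hB.congr_of_eventuallyEq himp
  have key := hA.unique hB'
  have hden : r₀ * v₀ ^ 2 ≠ 0 := by positivity
  rw [eq_div_iff hD₁]
  have e1 : Real.sin (2 * γ₀ + φ γ₀)
      = Real.sin (φ γ₀ + γ₀) * Real.cos γ₀ + Real.cos (φ γ₀ + γ₀) * Real.sin γ₀ := by
    rw [show 2 * γ₀ + φ γ₀ = (φ γ₀ + γ₀) + γ₀ by ring, Real.sin_add]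
  have e2 : Real.sin (φ γ₀)
      = Real.sin (φ γ₀ + γ₀) * Real.cos γ₀ - Real.cos (φ γ₀ + γ₀) * Real.sin γ₀ := by
    have h := Real.sin_sub (φ γ₀ + γ₀) γ₀
    simp only [add_sub_cancel_right] at h
    exact h
  have e3 : Real.sin (2 * γ₀) = 2 * Real.sin γ₀ * Real.cos γ₀ := Real.sin_two_mul γ₀
  rw [e1, e2, e3]
  push_cast at key
  rw [e2] at key
  field_simp at key ⊢
  linear_combination 2 * key
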